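/- The graph F5 satisfies γ_e(F5) < γ(F5). -/

import Mathlib

open SimpleGraph

/-- `D` is a dominating set of `G`. -/
def IsDomSet {V : Type*} (G : SimpleGraph V) (D : Finset V) : Prop :=
  ∀ v : V, v ∉ D → ∃ u ∈ D, G.Adj u v

/-- The domination number of `G`. -/
noncomputable def domNum {V : Type*} (G : SimpleGraph V) [Fintype V] : ℕ :=
  sInf {n | ∃ D : Finset V, IsDomSet G D ∧ D.card = n}

open Classical in
/-- `D` contains exactly one endvertex of a path between `u` and `v`. -/
def endCond {V : Type*} (D : Finset V) (u v : V) : Prop :=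
  if u = v then u ∈ D else ((u ∈ D ∧ v ∉ D) ∨ (u ∉ D ∧ v ∈ D))

/-- `dist_{(G,D)}(u,v)`: the minimum length of a path in `G` between `u` and `v` such
that `D` contains exactly one endvertex and no internal vertex of the path;
`⊤` if no such path exists. -/
noncomputable def eDist {V : Type*} (G : SimpleGraph V) (D : Finset V) (u v : V) : ℕ∞ :=
  ⨅ (p : {p : G.Walk u v // p.IsPath ∧ endCond D u v ∧
      ∀ w ∈ p.support, w ≠ u → w ≠ v → w ∉ D}), (p.1.length : ℕ∞)

/-- `(1/2)^(d-1)` for `d : ℕ∞`, with `(1/2)^∞ = 0`. -/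
noncomputable def halfPow (d : ℕ∞) : ℝ :=
  if d = ⊤ then 0 else 2 * (1 / 2 : ℝ) ^ d.toNat

/-- The weight `w_{(G,D)}(u)`. -/
noncomputable def expWeight {V : Type*} (G : SimpleGraph V) (D : Finset V) (u : V) : ℝ :=
  ∑ v ∈ D, halfPow (eDist G D u v)

/-- `D` is an exponential dominating set of `G`. -/
def IsExpDomSet {V : Type*} (G : SimpleGraph V) (D : Finset V) : Prop :=
  ∀ u : V, 1 ≤ expWeight G D u

/-- The exponential domination number of `G`. -/
noncomputable def expDomNum {V : Type*} (G : SimpleGraph V) [Fintype V] : ℕ :=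
  sInf {n | ∃ D : Finset V, IsExpDomSet G D ∧ D.card = n}

/-- `G` is `H`-free: `G` has no induced subgraph isomorphic to `H`. -/
def Free {V W : Type*} (G : SimpleGraph V) (H : SimpleGraph W) : Prop :=
  ¬ Nonempty (H ↪g G)

/-- The graph on `Fin n` with the given edge list. -/
def graphOfList (n : ℕ) (l : List (Fin n × Fin n)) : SimpleGraph (Fin n) :=
  SimpleGraph.fromRel (fun a b => (a, b) ∈ l)

/-- The bull `B`. -/
def bull : SimpleGraph (Fin 5) := graphOfList 5 [(0,1),(1,2),(0,2),(0,3),(1,4)]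
/-- The diamond `D` (`K₄` minus an edge). -/
def diamond : SimpleGraph (Fin 4) := graphOfList 4 [(0,1),(0,2),(0,3),(1,2),(1,3)]
/-- The complete graph `K₄`. -/
def K4 : SimpleGraph (Fin 4) := ⊤
/-- The complete bipartite graph `K_{2,3}` with parts `{0,1}` and `{2,3,4}`. -/
def K23 : SimpleGraph (Fin 5) := graphOfList 5 [(0,2),(0,3),(0,4),(1,2),(1,3),(1,4)]
/-- The 2×3 grid `P₂ □ P₃`. -/
def P2P3 : SimpleGraph (Fin 2 × Fin 3) := (pathGraph 2) □ (pathGraph 3)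
/-- The path on 7 vertices. -/
def P7 : SimpleGraph (Fin 7) := pathGraph 7
/-- The cycle on 7 vertices. -/
def C7 : SimpleGraph (Fin 7) := cycleGraph 7
/-- `F₁`: the path `0-1-2` with pendant vertices `3,4,5` attached to `0,1,2`. -/
def F1 : SimpleGraph (Fin 6) := graphOfList 6 [(0,1),(1,2),(0,3),(1,4),(2,5)]
/-- `F₂`: a 4-cycle with a pendant path on 3 new vertices. -/
def F2 : SimpleGraph (Fin 7) := graphOfList 7 [(0,1),(1,2),(2,3),(3,0),(0,4),(4,5),(5,6)]
/-- `F₃`: a 4-cycle `0-1-2-3` and a 5-cycle `1-2-4-5-6` sharing exactly the edge `1-2`. -/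
def F3 : SimpleGraph (Fin 7) := graphOfList 7 [(0,1),(1,2),(2,3),(3,0),(2,4),(4,5),(5,6),(6,1)]
/-- `F₄`: two 4-cycles sharing exactly the vertex `0`. -/
def F4 : SimpleGraph (Fin 7) := graphOfList 7 [(0,1),(1,2),(2,3),(3,0),(0,4),(4,5),(5,6),(6,0)]
/-- `F₅`: vertices `u=0, v₁=1, v₂=2, w=3, a=4, b=5, z=6`. -/
def F5 : SimpleGraph (Fin 7) := graphOfList 7 [(0,1),(0,2),(1,3),(2,3),(1,4),(4,5),(5,2),(3,6)]


section AuxExp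

instance F5.adjDecidable : DecidableRel F5.Adj := fun a b =>
  decidable_of_iff' _ (SimpleGraph.fromRel_adj _ a b)

lemma halfPow_nonneg (d : ℕ∞) : 0 ≤ halfPow d := by
  unfold halfPow; split <;> positivity

lemma halfPow_anti {d d' : ℕ∞} (h : d ≤ d') : halfPow d' ≤ halfPow d := by
  by_cases hd' : d' = ⊤
  · rw [hd']
    simpa [halfPow] using halfPow_nonneg d
  · have hd : d ≠ ⊤ := fun hh => hd' (top_le_iff.mp (hh ▸ h))
    unfold halfPow
    rw [if_neg hd, if_neg hd']
    have hle : d.toNat ≤ d'.toNat := ENat.toNat_le_toNat h hd'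
    have hpow := pow_le_pow_of_le_one (by norm_num : (0:ℝ) ≤ 1/2)
      (by norm_num : (1/2:ℝ) ≤ 1) hle
    linarith

lemma eDist_le {V : Type*} (G : SimpleGraph V) (D : Finset V) {u v : V}
    (p : G.Walk u v) (hp : p.IsPath) (he : endCond D u v)
    (hs : ∀ w ∈ p.support, w ≠ u → w ≠ v → w ∉ D) :
    eDist G D u v ≤ (p.length : ℕ∞) :=
  iInf_le (fun q : {q : G.Walk u v // q.IsPath ∧ endCond D u v ∧
      ∀ w ∈ q.support, w ≠ u → w ≠ v → w ∉ D} => (q.1.length : ℕ∞)) ⟨p, hp, he, hs⟩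

/-- The candidate exponential dominating set for `F5`. -/
def D03 : Finset (Fin 7) := {0, 3}

lemma halfPow_natCast (n : ℕ) : halfPow (n : ℕ∞) = 2 * (1/2 : ℝ) ^ n := by
  unfold halfPow
  simp

lemma endCond_of_ne {V : Type*} {D : Finset V} {u v : V} (h : ¬ u = v)
    (h2 : (u ∈ D ∧ v ∉ D) ∨ (u ∉ D ∧ v ∈ D)) : endCond D u v := by
  unfold endCond; rw [if_neg h]; exact h2

lemma endCond_of_eq {V : Type*} {D : Finset V} {u : V} (h : u ∈ D) : endCond D u u := by
  unfold endCond; rw [if_pos rfl]; exact h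

lemma bnd {u v : Fin 7} (n : ℕ) (p : F5.Walk u v) (hl : p.length = n)
    (hp : p.support.Nodup) (he : endCond D03 u v)
    (hs : ∀ w ∈ p.support, w ≠ u → w ≠ v → w ∉ D03) :
    2 * (1/2 : ℝ) ^ n ≤ halfPow (eDist F5 D03 u v) := by
  subst hl
  rw [← halfPow_natCast]
  exact halfPow_anti (eDist_le _ _ p ((SimpleGraph.Walk.isPath_def p).mpr hp) he hs)

lemma expWeight_D03 (u : Fin 7) :
    expWeight F5 D03 u = halfPow (eDist F5 D03 u 0) + halfPow (eDist F5 D03 u 3) := by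
  unfold expWeight D03
  rw [Finset.sum_pair (by decide : (0 : Fin 7) ≠ 3)]

lemma one_le_weight {u : Fin 7} {x y : ℝ}
    (hx : x ≤ halfPow (eDist F5 D03 u 0)) (hy : y ≤ halfPow (eDist F5 D03 u 3))
    (hxy : 1 ≤ x + y) : 1 ≤ expWeight F5 D03 u := by
  rw [expWeight_D03]; linarith

lemma isExpDomSet_D03 : IsExpDomSet F5 D03 := by
  intro u
  fin_cases u
  · exact one_le_weight
      (bnd 0 (Walk.nil : F5.Walk 0 0) rfl (by decide) (endCond_of_eq (by decide)) (by decide))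
      (halfPow_nonneg _) (by norm_num)
  · exact one_le_weight
      (bnd 1 (.cons (by decide : F5.Adj 1 0) .nil) (by simp) (by decide)
        (endCond_of_ne (by decide) (by decide)) (by decide))
      (bnd 1 (.cons (by decide : F5.Adj 1 3) .nil) (by simp) (by decide)
        (endCond_of_ne (by decide) (by decide)) (by decide))
      (by norm_num)
  · exact one_le_weight
      (bnd 1 (.cons (by decide : F5.Adj 2 0) .nil) (by simp) (by decide)
        (endCond_of_ne (by decide) (by decide)) (by decide))
      (bnd 1 (.cons (by decide : F5.Adj 2 3) .nil) (by simp) (by decide)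
        (endCond_of_ne (by decide) (by decide)) (by decide))
      (by norm_num)
  · exact one_le_weight (halfPow_nonneg _)
      (bnd 0 (Walk.nil : F5.Walk 3 3) rfl (by decide) (endCond_of_eq (by decide)) (by decide))
      (by norm_num)
  · exact one_le_weight
      (bnd 2 (.cons (by decide : F5.Adj 4 1) (.cons (by decide : F5.Adj 1 0) .nil)) (by simp)
        (by decide) (endCond_of_ne (by decide) (by decide)) (by decide))
      (bnd 2 (.cons (by decide : F5.Adj 4 1) (.cons (by decide : F5.Adj 1 3) .nil)) (by simp)
        (by decide) (endCond_of_ne (by decide) (by decide)) (by decide))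
      (by norm_num)
  · exact one_le_weight
      (bnd 2 (.cons (by decide : F5.Adj 5 2) (.cons (by decide : F5.Adj 2 0) .nil)) (by simp)
        (by decide) (endCond_of_ne (by decide) (by decide)) (by decide))
      (bnd 2 (.cons (by decide : F5.Adj 5 2) (.cons (by decide : F5.Adj 2 3) .nil)) (by simp)
        (by decide) (endCond_of_ne (by decide) (by decide)) (by decide))
      (by norm_num)
  · exact one_le_weight (halfPow_nonneg _)
      (bnd 1 (.cons (by decide : F5.Adj 6 3) .nil) (by simp) (by decide)
        (endCond_of_ne (by decide) (by decide)) (by decide))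
      (by norm_num)

instance (D : Finset (Fin 7)) : Decidable (IsDomSet F5 D) := by
  unfold IsDomSet; infer_instance

end AuxExp

set_option maxRecDepth 20000 in
/-- `γₑ(F₅) < γ(F₅)`. -/
theorem expDomNum_F5_lt_domNum_F5 : expDomNum F5 < domNum F5 := by
  have h2 : expDomNum F5 ≤ 2 :=
    Nat.sInf_le ⟨D03, isExpDomSet_D03, by decide⟩
  have hdom : ∀ Dset : Finset (Fin 7), IsDomSet F5 Dset → 3 ≤ Dset.card := by decide
  have h3 : 3 ≤ domNum F5 := by
    apply le_csInf
    · exact ⟨7, Finset.univ, fun v hv => absurd (Finset.mem_univ v) hv, by decide⟩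
    · rintro n ⟨Dset, hD, rfl⟩
      exact hdom Dset hD
  omega
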